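/- arXiv:1208.4267 — 3 statements merged into one kernel-verified Lean document; each statement's English description precedes it below -/
import Mathlib

section
/- Let X be a Banach space whose dual unit ball is weak-star sequentially compact, and whose dual X* has the dual weak Kadec-Klee property (weak-star convergent sequences on the dual unit sphere with limit in the sphere are weakly convergent). Then every separable subspace Y of X has separable dual; that is, X is an Asplund space. -/
open NormedSpace Filter Topology TopologicalSpace

/-- Weak-star convergence of a sequence in the dual. -/
def WStarTendsto {X : Type*} [NormedAddCommGroup X] [NormedSpace ℝ X]
    (f : ℕ → StrongDual ℝ X) (g : StrongDual ℝ X) : Prop :=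
  ∀ x : X, Tendsto (fun n => f n x) atTop (𝓝 (g x))

/-- Weak convergence of a sequence in the dual. -/
def WeakTendsto {X : Type*} [NormedAddCommGroup X] [NormedSpace ℝ X]
    (f : ℕ → StrongDual ℝ X) (g : StrongDual ℝ X) : Prop :=
  ∀ F : StrongDual ℝ (StrongDual ℝ X), Tendsto (fun n => F (f n)) atTop (𝓝 (F g))

/-- The dual weak Kadec-Klee property wKK*. -/
def WKKStar (X : Type*) [NormedAddCommGroup X] [NormedSpace ℝ X] : Prop :=
  ∀ (f : ℕ → StrongDual ℝ X) (g : StrongDual ℝ X), (∀ n, ‖f n‖ = 1) → ‖g‖ = 1 →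
    WStarTendsto f g → WeakTendsto f g

/-- The dual unit ball is weak-star sequentially compact. -/
def DualBallWStarSeqCompact (X : Type*) [NormedAddCommGroup X] [NormedSpace ℝ X] : Prop :=
  ∀ f : ℕ → StrongDual ℝ X, (∀ n, ‖f n‖ ≤ 1) →
    ∃ (g : StrongDual ℝ X) (φ : ℕ → ℕ), ‖g‖ ≤ 1 ∧ StrictMono φ ∧ WStarTendsto (f ∘ φ) g

/-- If functionals of norm at most one converge pointwise on a dense range, they converge
pointwise everywhere. -/
lemma aux_tendsto_dense {E : Type*} [NormedAddCommGroup E] [NormedSpace ℝ E]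
    {u : ℕ → E} (hu : DenseRange u) {d : ℕ → E →L[ℝ] ℝ} {a : E →L[ℝ] ℝ}
    (hd : ∀ n, ‖d n‖ ≤ 1) (ha : ‖a‖ ≤ 1)
    (h : ∀ k, Tendsto (fun n => d n (u k)) atTop (𝓝 (a (u k)))) (y : E) :
    Tendsto (fun n => d n y) atTop (𝓝 (a y)) := by
  rw [Metric.tendsto_atTop]
  intro ε hε
  obtain ⟨k, hk⟩ := hu.exists_dist_lt y (by positivity : (0:ℝ) < ε/4)
  obtain ⟨N, hN⟩ := (Metric.tendsto_atTop.1 (h k)) (ε/4) (by positivity)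
  refine ⟨N, fun n hn => ?_⟩
  have hyk : ‖y - u k‖ < ε/4 := by rwa [dist_eq_norm] at hk
  have h1 : ‖d n y - d n (u k)‖ ≤ ε/4 := by
    rw [← map_sub]
    calc ‖d n (y - u k)‖ ≤ ‖d n‖ * ‖y - u k‖ := (d n).le_opNorm _
      _ ≤ 1 * ‖y - u k‖ := mul_le_mul_of_nonneg_right (hd n) (norm_nonneg _)
      _ ≤ ε/4 := by rw [one_mul]; exact hyk.le
  have h3 : ‖a (u k) - a y‖ ≤ ε/4 := by
    rw [← map_sub]
    calc ‖a (u k - y)‖ ≤ ‖a‖ * ‖u k - y‖ := a.le_opNorm _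
      _ ≤ 1 * ‖u k - y‖ := mul_le_mul_of_nonneg_right ha (norm_nonneg _)
      _ ≤ ε/4 := by rw [one_mul, norm_sub_rev]; exact hyk.le
  have h2 : ‖d n (u k) - a (u k)‖ < ε/4 := by
    have := hN n hn; rwa [dist_eq_norm] at this
  have hdecomp : d n y - a y = (d n y - d n (u k)) + (d n (u k) - a (u k)) + (a (u k) - a y) := by
    ring
  rw [dist_eq_norm, hdecomp]
  calc ‖(d n y - d n (u k)) + (d n (u k) - a (u k)) + (a (u k) - a y)‖
      ≤ ‖d n y - d n (u k)‖ + ‖d n (u k) - a (u k)‖ + ‖a (u k) - a y‖ := norm_add₃_le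
    _ < ε := by linarith

/-- Separation of a point from a closed subspace by a continuous functional. -/
lemma aux_separation {E : Type*} [NormedAddCommGroup E] [NormedSpace ℝ E]
    (Z : Submodule ℝ E) (hZ : IsClosed (Z : Set E)) {a : E} (ha : a ∉ Z) :
    ∃ F : E →L[ℝ] ℝ, (∀ z ∈ Z, F z = 0) ∧ F a ≠ 0 := by
  obtain ⟨f, s, hfs, hsa⟩ := geometric_hahn_banach_closed_point Z.convex hZ ha
  have h0 : (0:ℝ) < s := by have := hfs 0 Z.zero_mem; simpa using this
  refine ⟨f, fun z hz => ?_, (h0.trans hsa).ne'⟩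
  by_contra hfz
  have h1 : ((s+1)/(f z)) • z ∈ Z := Z.smul_mem _ hz
  have h2 := hfs _ h1
  rw [map_smul, smul_eq_mul, div_mul_cancel₀ _ hfz] at h2
  linarith

/-- a Banach space whose dual unit ball is weak-star sequentially compact and
whose dual has the wKK* property is Asplund: every separable subspace has separable dual. -/
theorem asplund_of_wstarSeqCompact_and_wKKstar
    (X : Type*) [NormedAddCommGroup X] [NormedSpace ℝ X] [CompleteSpace X]
    (hseq : DualBallWStarSeqCompact X) (hKK : WKKStar X) :
    ∀ Y : Subspace ℝ X, SeparableSpace Y → SeparableSpace (StrongDual ℝ Y) := by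
  intro Y hY
  haveI := hY
  obtain ⟨u, hu⟩ := TopologicalSpace.exists_dense_seq Y
  -- a norm-preserving extension operator from `Y*` to `X*`
  have hext : ∀ f : StrongDual ℝ Y, ∃ g : StrongDual ℝ X, (∀ y : Y, g y = f y) ∧ ‖g‖ = ‖f‖ :=
    fun f => exists_extension_norm_eq Y f
  choose ext hext1 hext2 using hext
  -- the restriction operator from `X*` to `Y*`
  let R : StrongDual ℝ X →L[ℝ] StrongDual ℝ Y := (ContinuousLinearMap.compL ℝ Y X ℝ).flip Y.subtypeL
  have hR : ∀ (G : StrongDual ℝ X) (y : Y), R G y = G y := fun G y => rfl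
  have hRnorm : ∀ G : StrongDual ℝ X, ‖R G‖ ≤ ‖G‖ := by
    intro G
    refine ContinuousLinearMap.opNorm_le_bound _ (norm_nonneg G) (fun y => ?_)
    calc ‖R G y‖ = ‖G y‖ := by rw [hR]
      _ ≤ ‖G‖ * ‖(y : X)‖ := G.le_opNorm _
      _ = ‖G‖ * ‖y‖ := rfl
  -- the unit sphere of `Y*` and its image in `ℝ^ℕ` under evaluation at the dense sequence
  set P : Set (StrongDual ℝ Y) := {f | ‖f‖ = 1} with hPdef
  let e : StrongDual ℝ Y → (ℕ → ℝ) := fun f k => f (u k)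
  obtain ⟨D0, hD0c, hD0d⟩ := TopologicalSpace.exists_countable_dense ↥(e '' P)
  have hpre : ∀ z : ↥(e '' P), ∃ f, f ∈ P ∧ e f = (z : ℕ → ℝ) := fun z => z.2
  choose pre hpre1 hpre2 using hpre
  set D : Set (StrongDual ℝ Y) := pre '' D0 with hDdef
  set Z : Submodule ℝ (StrongDual ℝ Y) := (Submodule.span ℝ D).topologicalClosure with hZdef
  have hZclosed : IsClosed (Z : Set (StrongDual ℝ Y)) :=
    (Submodule.span ℝ D).isClosed_topologicalClosure
  -- the key step: every norm-one functional on `Y` lies in `Z`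
  have key : ∀ a ∈ P, a ∈ Z := by
    intro a haP
    have hmem : e a ∈ e '' P := Set.mem_image_of_mem e haP
    have hclo : (⟨e a, hmem⟩ : ↥(e '' P)) ∈ closure D0 := hD0d _
    obtain ⟨z, hzD0, hz⟩ := mem_closure_iff_seq_limit.1 hclo
    set d : ℕ → StrongDual ℝ Y := fun n => pre (z n) with hddef
    have hdP : ∀ n, d n ∈ P := fun n => hpre1 _
    have hdnorm : ∀ n, ‖d n‖ = 1 := fun n => hdP n
    have hdD : ∀ n, d n ∈ D := fun n => Set.mem_image_of_mem _ (hzD0 n)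
    -- pointwise convergence on the dense sequence
    have hconv0 : ∀ k, Tendsto (fun n => d n (u k)) atTop (𝓝 (a (u k))) := by
      intro k
      have hv : Tendsto (fun n => (z n : ℕ → ℝ)) atTop (𝓝 (e a)) :=
        (continuous_subtype_val.tendsto _).comp hz
      have h2 := (tendsto_pi_nhds.1 hv) k
      have hfun : (fun n => d n (u k)) = fun n => (z n : ℕ → ℝ) k :=
        funext fun n => congrFun (hpre2 (z n)) k
      rw [hfun]
      exact h2
    -- pointwise convergence everywhere
    have hconv : ∀ y : Y, Tendsto (fun n => d n y) atTop (𝓝 (a y)) :=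
      aux_tendsto_dense hu (fun n => le_of_eq (hdnorm n)) (le_of_eq haP) hconv0
    -- extract a weak-star convergent subsequence of the extensions
    have hEnorm : ∀ n, ‖ext (d n)‖ = 1 := fun n => (hext2 _).trans (hdnorm n)
    obtain ⟨G, φ, hG1, hφ, hGt⟩ := hseq (fun n => ext (d n)) (fun n => le_of_eq (hEnorm n))
    -- the restriction of the limit is `a`
    have hRG : R G = a := by
      ext y
      have h1 : Tendsto (fun n => (ext (d (φ n))) (y : X)) atTop (𝓝 (G y)) := hGt y
      have h3 : (fun n => (ext (d (φ n))) (y : X)) = fun n => d (φ n) y :=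
        funext fun n => hext1 _ y
      rw [h3] at h1
      have h2 : Tendsto (fun n => d (φ n) y) atTop (𝓝 (a y)) :=
        (hconv y).comp hφ.tendsto_atTop
      exact tendsto_nhds_unique h1 h2
    have hGnorm : ‖G‖ = 1 := le_antisymm hG1 (by
      calc (1:ℝ) = ‖a‖ := haP.symm
        _ = ‖R G‖ := by rw [hRG]
        _ ≤ ‖G‖ := hRnorm G)
    -- apply the wKK* property
    have hweak := hKK (fun n => ext (d (φ n))) G (fun n => hEnorm _) hGnorm hGt
    -- conclude that `a` is in `Z` by Hahn-Banach separation
    by_contra haZ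
    obtain ⟨F0, hF0Z, hF0a⟩ := aux_separation (E := StrongDual ℝ Y) Z hZclosed (a := a) haZ
    have hdZ : ∀ n, d n ∈ Z := fun n =>
      (Submodule.span ℝ D).le_topologicalClosure (Submodule.subset_span (hdD n))
    have hRE : ∀ n, R (ext (d n)) = d n := by
      intro n; ext y; exact hext1 _ y
    have hw := hweak (F0.comp R)
    have hzero : (fun n => (F0.comp R) ((fun m => ext (d (φ m))) n)) = fun _ => (0:ℝ) := by
      funext n
      have : (F0.comp R) (ext (d (φ n))) = F0 (d (φ n)) := by
        rw [ContinuousLinearMap.comp_apply, hRE]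
      rw [this]
      exact hF0Z _ (hdZ _)
    rw [hzero] at hw
    have hF0G : (F0.comp R) G = 0 := tendsto_nhds_unique hw tendsto_const_nhds
    rw [ContinuousLinearMap.comp_apply, hRG] at hF0G
    exact hF0a hF0G
  -- every functional lies in `Z`
  have hall : ∀ f : StrongDual ℝ Y, f ∈ Z := by
    intro f
    rcases eq_or_ne f 0 with h | h
    · rw [h]; exact Z.zero_mem
    · have hf : ‖f‖ ≠ 0 := fun h0 => h ((ContinuousLinearMap.opNorm_zero_iff f).1 h0)
      have h1 : (‖f‖⁻¹ • f) ∈ P := by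
        simp only [hPdef, Set.mem_setOf_eq, norm_smul, norm_inv, norm_norm]
        exact (le_antisymm (ContinuousLinearMap.opNorm_smul_le _ f) (by
          have hp : 0 < ‖f‖ := lt_of_le_of_ne (ContinuousLinearMap.opNorm_nonneg f) (Ne.symm hf)
          have hr : ‖‖f‖‖ = ‖f‖ := Real.norm_of_nonneg hp.le
          have h5 := ContinuousLinearMap.opNorm_smul_le ‖f‖ (‖f‖⁻¹ • f)
          rw [smul_smul, mul_inv_cancel₀ hf, one_smul, hr] at h5
          rw [norm_inv, hr, inv_mul_cancel₀ hf]
          nlinarith)).trans (by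
          have hr : ‖‖f‖‖ = ‖f‖ := Real.norm_of_nonneg (ContinuousLinearMap.opNorm_nonneg f)
          rw [norm_inv, hr]; exact inv_mul_cancel₀ hf)
      have h2 : f = ‖f‖ • (‖f‖⁻¹ • f) := by
        rw [smul_smul, mul_inv_cancel₀ hf, one_smul]
      rw [h2]
      exact Z.smul_mem _ (key _ h1)
  -- `Z` is separable, hence so is the dual
  have hDc : D.Countable := hD0c.image _
  have hsep : IsSeparable (Z : Set (StrongDual ℝ Y)) := by
    have h1 : IsSeparable (Submodule.span ℝ D : Set (StrongDual ℝ Y)) := hDc.isSeparable.span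
    have h2 := h1.closure
    rwa [hZdef, Submodule.topologicalClosure_coe]
  have huniv : (Z : Set (StrongDual ℝ Y)) = Set.univ := Set.eq_univ_of_forall hall
  rw [huniv] at hsep
  exact isSeparable_univ_iff.1 hsep
end

section
/- Let X be a Banach space such that: (a) countable intersections of coseparable closed subspaces of X are coseparable (a closed subspace Z is coseparable if X/Z is separable), and (b) X* has the dual weak Kadec-Klee property. Then X is an Asplund space. -/
open NormedSpace Filter Topology TopologicalSpace

-- quotient by kernel of a functional is separable
lemma sep_quot_ker {X : Type*} [NormedAddCommGroup X] [NormedSpace ℝ X] (f : StrongDual ℝ X) :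
    SeparableSpace (X ⧸ (LinearMap.ker (f : X →ₗ[ℝ] ℝ) : Subspace ℝ X)) := by
  by_cases hf : ∃ x : X, f x ≠ 0
  · obtain ⟨x₀, hx₀⟩ := hf
    set K : Subspace ℝ X := LinearMap.ker (f : X →ₗ[ℝ] ℝ)
    have hsurj : Function.Surjective
        (fun c : ℝ => c • (Submodule.Quotient.mk x₀ : X ⧸ K)) := by
      intro z
      obtain ⟨y, rfl⟩ := Submodule.Quotient.mk_surjective K z
      refine ⟨f y / f x₀, ?_⟩
      have : (f y / f x₀) • x₀ - y ∈ K := by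
        simp only [K, LinearMap.mem_ker, map_sub, map_smul, smul_eq_mul, ContinuousLinearMap.coe_coe]
        field_simp; simp
      calc (f y / f x₀) • (Submodule.Quotient.mk x₀ : X ⧸ K)
          = Submodule.Quotient.mk ((f y / f x₀) • x₀) := by
            rw [← Submodule.Quotient.mk_smul]
        _ = Submodule.Quotient.mk y := by
            rw [Submodule.Quotient.eq]; exact this
    have hcont : Continuous (fun c : ℝ => c • (Submodule.Quotient.mk x₀ : X ⧸ K)) :=
      by fun_prop
    exact hsurj.denseRange.separableSpace hcont
  · push_neg at hf
    have : LinearMap.ker (f : X →ₗ[ℝ] ℝ) = (⊤ : Subspace ℝ X) := by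
      ext x; simp [LinearMap.mem_ker, hf x]
    rw [this]
    have : Subsingleton (X ⧸ (⊤ : Subspace ℝ X)) := Submodule.Quotient.subsingleton_iff.mpr rfl
    infer_instance

-- countable dense subset of a set in a second countable space
lemma exists_countable_dense_subset' {β : Type*} [TopologicalSpace β]
    [SecondCountableTopology β] (s : Set β) :
    ∃ t, t ⊆ s ∧ t.Countable ∧ ∀ x ∈ s, x ∈ closure t := by
  obtain ⟨c, hc, hcd⟩ := TopologicalSpace.exists_countable_dense s
  refine ⟨Subtype.val '' c, by simp, hc.image _, fun x hx => ?_⟩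
  have : (⟨x, hx⟩ : s) ∈ closure c := hcd.closure_eq ▸ Set.mem_univ _
  have := image_closure_subset_closure_image (f := (Subtype.val : s → β))
    continuous_subtype_val (Set.mem_image_of_mem _ this)
  simpa using this

-- 3-epsilon upgrade of pointwise convergence on a dense sequence
lemma tendsto_of_tendsto_dense {E : Type*} [SeminormedAddCommGroup E] [NormedSpace ℝ E]
    {v : ℕ → E} (hv : DenseRange v) {s : ℕ → StrongDual ℝ E} {h : StrongDual ℝ E}
    (hb : ∀ n, ‖s n‖ ≤ 1) (hh : ‖h‖ ≤ 1)
    (hp : ∀ m, Tendsto (fun n => s n (v m)) atTop (𝓝 (h (v m)))) (e : E) :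
    Tendsto (fun n => s n e) atTop (𝓝 (h e)) := by
  rw [Metric.tendsto_atTop]
  intro ε hε
  obtain ⟨m, hm⟩ := hv.exists_dist_lt e (by positivity : (0:ℝ) < ε / 4)
  have := (Metric.tendsto_atTop.mp (hp m)) (ε / 4) (by positivity)
  obtain ⟨N, hN⟩ := this
  refine ⟨N, fun n hn => ?_⟩
  have h1 : dist (s n e) (s n (v m)) ≤ ε / 4 := by
    rw [dist_eq_norm, ← map_sub]
    calc ‖s n (e - v m)‖ ≤ ‖s n‖ * ‖e - v m‖ := (s n).le_opNorm _
      _ ≤ 1 * ‖e - v m‖ := by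
          exact mul_le_mul_of_nonneg_right (hb n) (norm_nonneg _)
      _ ≤ ε / 4 := by
          rw [one_mul]
          have : dist e (v m) < ε / 4 := hm
          rw [dist_eq_norm] at this; linarith
  have h2 : dist (s n (v m)) (h (v m)) < ε / 4 := hN n hn
  have h3 : dist (h (v m)) (h e) ≤ ε / 4 := by
    rw [dist_eq_norm, ← map_sub]
    calc ‖h (v m - e)‖ ≤ ‖h‖ * ‖v m - e‖ := h.le_opNorm _
      _ ≤ 1 * ‖v m - e‖ := mul_le_mul_of_nonneg_right hh (norm_nonneg _)
      _ ≤ ε / 4 := by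
          rw [one_mul]
          have : dist e (v m) < ε / 4 := hm
          rw [dist_comm, dist_eq_norm] at this; linarith
  calc dist (s n e) (h e) ≤ dist (s n e) (s n (v m)) + dist (s n (v m)) (h (v m))
        + dist (h (v m)) (h e) := dist_triangle4 _ _ _ _
    _ < ε := by linarith

-- a weak limit of elements of a closed subspace lies in the subspace
lemma mem_closure_of_weak_limit {W : Type*} [NormedAddCommGroup W] [NormedSpace ℝ W]
    {s : ℕ → W} {g : W} (V : Submodule ℝ W) (hs : ∀ n, s n ∈ V.topologicalClosure)
    (hw : ∀ F : StrongDual ℝ W, Tendsto (fun n => F (s n)) atTop (𝓝 (F g))) :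
    g ∈ V.topologicalClosure := by
  by_contra hg
  obtain ⟨F, u, hFs, hFg⟩ := geometric_hahn_banach_closed_point
    (V.topologicalClosure.convex) V.isClosed_topologicalClosure hg
  have hu : 0 < u := by
    have := hFs 0 (Submodule.zero_mem _)
    simpa using this
  have hF0 : ∀ a ∈ V.topologicalClosure, F a = 0 := by
    intro a ha
    by_contra hFa
    have := hFs (((u + 1) / F a) • a) (Submodule.smul_mem _ _ ha)
    rw [map_smul] at this
    simp only [smul_eq_mul] at this
    rw [div_mul_cancel₀ _ hFa] at this
    linarith
  have h1 : Tendsto (fun n => F (s n)) atTop (𝓝 (0 : ℝ)) := by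
    have : (fun n => F (s n)) = fun _ => (0:ℝ) := funext fun n => hF0 _ (hs n)
    rw [this]; exact tendsto_const_nhds
  have := tendsto_nhds_unique (hw F) h1
  rw [this] at hFg
  linarith

-- Main abstract lemma: if `E` is separable and functionals on `E` pull back isometrically
-- to functionals on `X`, where `X` has wKK*, then `StrongDual ℝ E` is separable.
lemma dual_separable_of_isometric_pullback {X E : Type*}
    [NormedAddCommGroup X] [NormedSpace ℝ X]
    [SeminormedAddCommGroup E] [NormedSpace ℝ E] [SeparableSpace E]
    (hKK : WKKStar X) (q : X →L[ℝ] E)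
    (hq : ∀ h : StrongDual ℝ E, ‖h.comp q‖ = ‖h‖) :
    SeparableSpace (StrongDual ℝ E) := by
  classical
  -- the pullback as a linear map
  set TL : StrongDual ℝ E →ₗ[ℝ] StrongDual ℝ X :=
    { toFun := fun h => h.comp q
      map_add' := fun h h' => by ext x; simp [ContinuousLinearMap.add_comp]
      map_smul' := fun c h => by ext x; simp [ContinuousLinearMap.smul_comp] } with hTL
  have hTLapp : ∀ (h : StrongDual ℝ E) (x : X), TL h x = h (q x) := fun h x => rfl
  have hTLnorm : ∀ h : StrongDual ℝ E, ‖TL h‖ = ‖h‖ := fun h => hq h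
  have hTLiso : Isometry TL := AddMonoidHomClass.isometry_of_norm TL hTLnorm
  have hdual0 : ∀ hh : StrongDual ℝ E, ‖hh‖ = 0 → hh = 0 := by
    intro hh hz
    ext e
    have h1 := hh.le_opNorm e
    rw [hz, zero_mul] at h1
    simpa using le_antisymm h1 (norm_nonneg _)
  set Sph : Set (StrongDual ℝ E) := {h | ‖h‖ = 1} with hSph
  by_cases hSne : Sph.Nonempty
  swap
  · -- dual is trivial
    have hzero : ∀ h : StrongDual ℝ E, h = 0 := by
      intro h
      by_contra h0
      have hn : ‖h‖ ≠ 0 := fun hz => h0 (hdual0 h hz)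
      exact hSne ⟨‖h‖⁻¹ • h, by
        simp [hSph, norm_smul, abs_of_nonneg (inv_nonneg.mpr (norm_nonneg h)),
          inv_mul_cancel₀ hn]⟩
    have : Subsingleton (StrongDual ℝ E) := ⟨fun a b => by rw [hzero a, hzero b]⟩
    infer_instance
  have : Nonempty E := ⟨0⟩
  set v : ℕ → E := denseSeq E with hv_def
  have hv : DenseRange v := denseRange_denseSeq E
  set Φ : StrongDual ℝ E → (ℕ → ℝ) := fun h m => h (v m) with hΦ
  obtain ⟨t, hts, htc, htd⟩ := exists_countable_dense_subset' (Φ '' Sph)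
  have htne : t.Nonempty := by
    by_contra hte
    rw [Set.not_nonempty_iff_eq_empty] at hte
    obtain ⟨h₀, hh₀⟩ := hSne
    have := htd (Φ h₀) (Set.mem_image_of_mem _ hh₀)
    simp [hte] at this
  obtain ⟨uenum, huenum⟩ := Set.Countable.exists_eq_range htc htne
  have hchoice : ∀ i : ℕ, ∃ h, h ∈ Sph ∧ Φ h = uenum i := by
    intro i
    have : uenum i ∈ t := huenum ▸ Set.mem_range_self i
    obtain ⟨h, hh, hΦh⟩ := hts this
    exact ⟨h, hh, hΦh⟩
  choose gq hgq1 hgq2 using hchoice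
  set QS : Set (StrongDual ℝ E) := Set.range gq with hQS
  set M : Set (StrongDual ℝ E) := closure ((Submodule.span ℝ QS : Submodule ℝ (StrongDual ℝ E)) : Set _)
    with hM
  -- every element of the sphere lies in M
  have key : ∀ h ∈ Sph, h ∈ M := by
    intro h hh
    have h1 : Φ h ∈ closure t := htd (Φ h) (Set.mem_image_of_mem _ hh)
    rw [huenum] at h1
    obtain ⟨w, hw_mem, hw_tendsto⟩ := mem_closure_iff_seq_limit.mp h1
    choose idx hidx using hw_mem
    set sOK : ℕ → StrongDual ℝ E := fun n => gq (idx n) with hsOK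
    have hnorm1 : ∀ n, ‖sOK n‖ = 1 := fun n => hgq1 (idx n)
    have hpt : ∀ m, Tendsto (fun n => sOK n (v m)) atTop (𝓝 (h (v m))) := by
      intro m
      have : (fun n => sOK n (v m)) = fun n => w n m := by
        funext n
        have : Φ (gq (idx n)) = w n := by rw [hgq2 (idx n), hidx n]
        exact congrFun this m
      rw [this]
      exact (tendsto_pi_nhds.mp hw_tendsto) m
    have hall : ∀ e : E, Tendsto (fun n => sOK n e) atTop (𝓝 (h e)) :=
      tendsto_of_tendsto_dense hv (fun n => le_of_eq (hnorm1 n)) (le_of_eq hh)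
        hpt
    -- apply wKK*
    have hW : WeakTendsto (fun n => TL (sOK n)) (TL h) := by
      apply hKK _ _ (fun n => by rw [hTLnorm]; exact hnorm1 n) (by rw [hTLnorm]; exact hh)
      intro x
      exact hall (q x)
    -- the weak limit lies in the closed span
    have hmem : TL h ∈ (Submodule.span ℝ (TL '' QS)).topologicalClosure := by
      apply mem_closure_of_weak_limit _ _ hW
      intro n
      apply Submodule.le_topologicalClosure
      apply Submodule.subset_span
      exact Set.mem_image_of_mem _ (Set.mem_range_self (idx n))
    -- pull back along the isometry
    have hset : ((Submodule.span ℝ (TL '' QS)).topologicalClosure : Set (StrongDual ℝ X))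
        = closure (TL '' ((Submodule.span ℝ QS : Submodule ℝ (StrongDual ℝ E)) : Set _)) := by
      rw [Submodule.topologicalClosure_coe, ← Submodule.map_span, Submodule.map_coe]
    have hmem' : TL h ∈ ((Submodule.span ℝ (TL '' QS)).topologicalClosure : Set (StrongDual ℝ X)) :=
      hmem
    rw [hset] at hmem'
    have hcl := hTLiso.isUniformInducing.isInducing.closure_eq_preimage_closure_image
      ((Submodule.span ℝ QS : Submodule ℝ (StrongDual ℝ E)) : Set (StrongDual ℝ E))
    show h ∈ closure ((Submodule.span ℝ QS : Submodule ℝ (StrongDual ℝ E)) : Set _)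
    rw [hcl]
    exact hmem'
  -- M is separable
  have hMsep : IsSeparable M := ((Set.countable_range gq).isSeparable.span).closure
  -- cover the whole dual by scalings of the sphere
  have hcover : (Set.univ : Set (StrongDual ℝ E)) ⊆
      (fun p : ℝ × StrongDual ℝ E => p.1 • p.2) '' ((Set.univ : Set ℝ) ×ˢ M) := by
    intro h _
    by_cases h0 : h = 0
    · obtain ⟨h₀, hh₀⟩ := hSne
      exact ⟨(0, h₀), ⟨Set.mem_univ _, key h₀ hh₀⟩, by simp [h0]⟩
    · have hn : ‖h‖ ≠ 0 := fun hz => h0 (hdual0 h hz)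
      refine ⟨(‖h‖, ‖h‖⁻¹ • h), ⟨Set.mem_univ _, key _ ?_⟩, ?_⟩
      · simp [hSph, norm_smul, abs_of_nonneg (inv_nonneg.mpr (norm_nonneg h)),
          inv_mul_cancel₀ hn]
      · simp [smul_smul, mul_inv_cancel₀ hn]
  have hsep : IsSeparable (Set.univ : Set (StrongDual ℝ E)) := by
    apply IsSeparable.mono _ hcover
    exact ((IsSeparable.of_separableSpace (Set.univ : Set ℝ)).prod hMsep).image
      (continuous_fst.smul continuous_snd)
  exact isSeparable_univ_iff.mp hsep

set_option maxHeartbeats 1000000 in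
/-- if countable intersections of coseparable closed subspaces of `X` are
coseparable, and `X*` has the wKK* property, then `X` is Asplund. -/
theorem asplund_of_coseparable_intersections_and_wKKstar
    (X : Type*) [NormedAddCommGroup X] [NormedSpace ℝ X] [CompleteSpace X]
    (hcosep : ∀ Z : ℕ → Subspace ℝ X, (∀ n, IsClosed (Z n : Set X)) →
      (∀ n, SeparableSpace (X ⧸ Z n)) → SeparableSpace (X ⧸ (⨅ n, Z n)))
    (hKK : WKKStar X) :
    ∀ Y : Subspace ℝ X, SeparableSpace Y → SeparableSpace (StrongDual ℝ Y) := by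
  classical
  intro Y hYsep
  haveI := hYsep
  haveI : Nonempty Y := ⟨0⟩
  set yD : ℕ → Y := denseSeq Y with hyD_def
  have hyD : DenseRange yD := denseRange_denseSeq Y
  choose f hf1 hf2 using fun k => exists_dual_vector'' ℝ ((yD k : X))
  set Z : ℕ → Subspace ℝ X := fun k => LinearMap.ker (f k : X →ₗ[ℝ] ℝ) with hZ
  have hZc : ∀ k, IsClosed ((Z k : Set X)) := fun k => ContinuousLinearMap.isClosed_ker (f k)
  haveI hEsep : SeparableSpace (X ⧸ (⨅ k, Z k)) :=
    hcosep Z hZc (fun k => sep_quot_ker (f k))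
  set N : Subspace ℝ X := ⨅ k, Z k with hN
  -- the quotient map as a continuous linear map
  set qC : X →L[ℝ] (X ⧸ N) := LinearMap.mkContinuous N.mkQ 1
    (fun x => by simpa using Submodule.Quotient.norm_mk_le N x) with hqC
  have hq_app : ∀ x : X, qC x = Submodule.Quotient.mk x := fun x => rfl
  have hq_le : ∀ x : X, ‖qC x‖ ≤ ‖x‖ := fun x => by
    simpa [hq_app] using Submodule.Quotient.norm_mk_le N x
  have hqnorm : ‖qC‖ ≤ 1 := LinearMap.mkContinuous_norm_le _ zero_le_one _
  -- each functional f k is bounded by the quotient seminorm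
  have hfk : ∀ (k : ℕ) (x : X), ‖f k x‖ ≤ ‖qC x‖ := by
    intro k x
    refine le_of_forall_pos_le_add ?_
    intro ε hε
    obtain ⟨m, hme, hmlt⟩ := Submodule.Quotient.norm_mk_lt (qC x) hε
    have hmx : m - x ∈ N := by
      rw [← Submodule.Quotient.eq]
      exact hme.trans (hq_app x)
    have hkm : f k m = f k x := by
      have h0 : f k (m - x) = 0 := by
        have : m - x ∈ Z k := (iInf_le Z k : N ≤ Z k) hmx
        simpa [hZ, LinearMap.mem_ker] using this
      have := map_sub (f k) m x
      rw [h0] at this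
      linarith [this]
    calc ‖f k x‖ = ‖f k m‖ := by rw [hkm]
      _ ≤ ‖f k‖ * ‖m‖ := (f k).le_opNorm m
      _ ≤ 1 * ‖m‖ := mul_le_mul_of_nonneg_right (hf1 k) (norm_nonneg m)
      _ ≤ ‖qC x‖ + ε := by rw [one_mul]; linarith
  -- the quotient map does not decrease norms on Y
  have hYlow : ∀ y : Y, ‖(y : X)‖ ≤ ‖qC (y : X)‖ := by
    intro y
    refine le_of_forall_pos_le_add ?_
    intro ε hε
    obtain ⟨k, hk⟩ := hyD.exists_dist_lt y (by positivity : (0:ℝ) < ε / 2)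
    have hdist : ‖(yD k : X) - (y : X)‖ < ε / 2 := by
      have : dist (yD k) y < ε / 2 := by rwa [dist_comm] at hk
      rwa [Subtype.dist_eq, dist_eq_norm] at this
    have h1 : ‖(y : X)‖ ≤ ‖(yD k : X)‖ + ε / 2 := by
      calc ‖(y : X)‖ ≤ ‖(yD k : X)‖ + ‖(y : X) - (yD k : X)‖ := norm_le_insert' _ _
        _ ≤ ‖(yD k : X)‖ + ε / 2 := by
            rw [← norm_neg ((y : X) - (yD k : X))] at *
            simp only [neg_sub] at *
            linarith
    have h2 : ‖(yD k : X)‖ = f k (yD k : X) := (hf2 k).symm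
    have h3 : f k (yD k : X) ≤ ‖f k ((y : X))‖ + ‖(yD k : X) - (y : X)‖ := by
      have := map_sub (f k) ((yD k : X)) ((y : X))
      have habs : f k ((yD k : X)) - f k ((y : X)) ≤ ‖f k ((yD k : X) - (y : X))‖ :=
        this ▸ le_abs_self _
      have hb : ‖f k ((yD k : X) - (y : X))‖ ≤ ‖(yD k : X) - (y : X)‖ := by
        calc ‖f k ((yD k : X) - (y : X))‖ ≤ ‖f k‖ * ‖(yD k : X) - (y : X)‖ :=
              (f k).le_opNorm _
          _ ≤ 1 * _ := mul_le_mul_of_nonneg_right (hf1 k) (norm_nonneg _)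
          _ = _ := one_mul _
      have := le_abs_self (f k ((y : X)))
      have habs2 : f k ((y : X)) ≤ ‖f k ((y : X))‖ := by
        simpa [Real.norm_eq_abs] using this
      linarith
    have h4 : ‖f k ((y : X))‖ ≤ ‖qC (y : X)‖ := hfk k _
    linarith
  -- pullback of functionals is isometric
  have hq_iso : ∀ h : StrongDual ℝ (X ⧸ N), ‖h.comp qC‖ = ‖h‖ := by
    intro h
    refine le_antisymm ?_ ?_
    · calc ‖h.comp qC‖ ≤ ‖h‖ * ‖qC‖ := h.opNorm_comp_le qC
        _ ≤ ‖h‖ * 1 := mul_le_mul_of_nonneg_left hqnorm (norm_nonneg h)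
        _ = ‖h‖ := mul_one _
    · refine h.opNorm_le_bound (norm_nonneg _) ?_
      intro e
      refine le_of_forall_pos_le_add ?_
      intro δ hδ
      have hc : (0:ℝ) < δ / (‖h.comp qC‖ + 1) := by positivity
      obtain ⟨m, hme, hmlt⟩ := Submodule.Quotient.norm_mk_lt e hc
      have he : h e = (h.comp qC) m := by
        rw [ContinuousLinearMap.comp_apply, hq_app, hme]
      calc ‖h e‖ = ‖(h.comp qC) m‖ := by rw [he]
        _ ≤ ‖h.comp qC‖ * ‖m‖ := (h.comp qC).le_opNorm m
        _ ≤ ‖h.comp qC‖ * (‖e‖ + δ / (‖h.comp qC‖ + 1)) := by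
            exact mul_le_mul_of_nonneg_left (le_of_lt hmlt) (norm_nonneg _)
        _ ≤ ‖h.comp qC‖ * ‖e‖ + δ := by
            rw [mul_add]
            have h1 : ‖h.comp qC‖ * (δ / (‖h.comp qC‖ + 1)) ≤ δ := by
              rw [mul_div_assoc']
              rw [div_le_iff₀ (by positivity)]
              nlinarith [norm_nonneg (h.comp qC)]
            linarith
  haveI hdualE : SeparableSpace (StrongDual ℝ (X ⧸ N)) :=
    dual_separable_of_isometric_pullback hKK qC hq_iso
  -- restriction map onto StrongDual ℝ Y
  set A : Y →L[ℝ] (X ⧸ N) := qC.comp (Y.subtypeL) with hA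
  have hA_app : ∀ y : Y, A y = qC (y : X) := fun y => rfl
  have hAnorm : ∀ y : Y, ‖A y‖ ≤ ‖y‖ := fun y => by
    rw [hA_app]; exact (hq_le _)
  have hAlow : ∀ y : Y, ‖y‖ ≤ ‖A y‖ := fun y => by
    rw [hA_app]; exact hYlow y
  set Aₗ : Y →ₗ[ℝ] (X ⧸ N) := (A : Y →ₗ[ℝ] X ⧸ N) with hAₗ
  have hAinj : Function.Injective Aₗ := by
    intro a b hab
    have h0 : A (a - b) = 0 := by
      have : Aₗ (a - b) = 0 := by rw [map_sub, hab, sub_self]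
      exact this
    have := hAlow (a - b)
    rw [h0] at this
    simp only [norm_zero] at this
    have : ‖a - b‖ = 0 := le_antisymm this (norm_nonneg _)
    rwa [norm_sub_eq_zero_iff] at this
  set eqv : Y ≃ₗ[ℝ] (LinearMap.range Aₗ) := LinearEquiv.ofInjective Aₗ hAinj with heqv
  set ρ : StrongDual ℝ (X ⧸ N) → StrongDual ℝ Y := fun hE => hE.comp A with hρ
  have hρcont : Continuous ρ := by
    exact continuous_id.clm_comp continuous_const
  have hρsurj : Function.Surjective ρ := by
    intro φ
    set ψ₀ : (LinearMap.range Aₗ) →ₗ[ℝ] ℝ :=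
      (φ : Y →ₗ[ℝ] ℝ).comp (eqv.symm.toLinearMap) with hψ₀
    have hψbound : ∀ w : (LinearMap.range Aₗ), ‖ψ₀ w‖ ≤ ‖φ‖ * ‖w‖ := by
      intro w
      obtain ⟨y, hy⟩ := eqv.surjective w
      have h1 : ψ₀ w = φ y := by
        rw [hψ₀, LinearMap.comp_apply, ← hy, LinearEquiv.coe_toLinearMap,
          LinearEquiv.symm_apply_apply]
        rfl
      have h2 : ((w : X ⧸ N)) = Aₗ y := by
        rw [← hy, heqv]
        exact LinearEquiv.ofInjective_apply Aₗ y
      have h3 : ‖w‖ = ‖A y‖ := by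
        have : ‖w‖ = ‖(w : X ⧸ N)‖ := rfl
        rw [this, h2]; rfl
      rw [h1, h3]
      calc ‖φ y‖ ≤ ‖φ‖ * ‖y‖ := φ.le_opNorm y
        _ ≤ ‖φ‖ * ‖A y‖ := mul_le_mul_of_nonneg_left (hAlow y) (norm_nonneg φ)
    set ψ : (LinearMap.range Aₗ) →L[ℝ] ℝ := LinearMap.mkContinuous ψ₀ ‖φ‖ hψbound with hψ
    obtain ⟨G, hG, _⟩ := exists_extension_norm_eq (LinearMap.range Aₗ) ψ
    refine ⟨G, ?_⟩
    ext y
    have h2 : A y ∈ LinearMap.range Aₗ := ⟨y, rfl⟩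
    have h3 : (⟨A y, h2⟩ : LinearMap.range Aₗ) = eqv y :=
      Subtype.ext (LinearEquiv.ofInjective_apply Aₗ y).symm
    calc (ρ G) y = G (A y) := rfl
      _ = ψ (⟨A y, h2⟩ : LinearMap.range Aₗ) := (hG ⟨A y, h2⟩)
      _ = ψ₀ (eqv y) := by rw [h3]; rfl
      _ = φ (eqv.symm (eqv y)) := rfl
      _ = φ y := by rw [LinearEquiv.symm_apply_apply]
  exact hρsurj.denseRange.separableSpace hρcont
end

section
/- Let X be a Banach space with the 1-separable complementation property (every separable subspace is contained in a separable subspace that is the range of a norm-one linear projection), and suppose X* has the dual weak Kadec-Klee property. Then X is an Asplund space. -/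
open NormedSpace Filter Topology TopologicalSpace

/-- The 1-separable complementation property: every separable subspace is contained in a
separable subspace which is the range of a norm-one linear projection. -/
def OneSCP (X : Type*) [NormedAddCommGroup X] [NormedSpace ℝ X] : Prop :=
  ∀ Y : Subspace ℝ X, SeparableSpace Y →
    ∃ (Z : Subspace ℝ X) (P : X →L[ℝ] X), Y ≤ Z ∧ SeparableSpace Z ∧
      ‖P‖ = 1 ∧ (∀ w : X, P w ∈ Z) ∧ (∀ z ∈ Z, P z = z)

/-- Mazur-type lemma: if `f` is the weak limit of a sequence lying in a closed submodule,
then `f` belongs to that submodule. -/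
lemma mem_of_weak_lim {E : Type*} [NormedAddCommGroup E] [NormedSpace ℝ E]
    (M : Submodule ℝ E) (hM : IsClosed (M : Set E)) (d : ℕ → E)
    (hd : ∀ n, d n ∈ M) (f : E)
    (h : ∀ F : E →L[ℝ] ℝ, Tendsto (fun n => F (d n)) atTop (𝓝 (F f))) : f ∈ M := by
  by_contra hf
  obtain ⟨l, u, hlf, hub⟩ := geometric_hahn_banach_point_closed M.convex hM hf
  have hu0 : u < l 0 := hub 0 M.zero_mem
  rw [map_zero] at hu0
  have hl0 : ∀ b ∈ M, l b = 0 := by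
    intro b hb
    by_contra hb0
    have h2 := hub (((u - 1) / l b) • b) (M.smul_mem _ hb)
    rw [map_smul, smul_eq_mul, div_mul_cancel₀ _ hb0] at h2
    linarith
  have h1 : Tendsto (fun n => l (d n)) atTop (𝓝 (l f)) := h l
  have h2 : Tendsto (fun n => l (d n)) atTop (𝓝 0) := by
    have heq : (fun n => l (d n)) = fun _ => (0 : ℝ) := funext fun n => hl0 _ (hd n)
    rw [heq]; exact tendsto_const_nhds
  have := tendsto_nhds_unique h1 h2
  linarith

/-- If a uniformly bounded sequence of functionals converges pointwise on a dense range,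
it converges pointwise everywhere. -/
lemma tendsto_eval_of_dense {Z : Type*} [NormedAddCommGroup Z] [NormedSpace ℝ Z]
    (s : ℕ → Z) (hs : DenseRange s) (d : ℕ → Z →L[ℝ] ℝ) (f : Z →L[ℝ] ℝ)
    (hdn : ∀ n, ‖d n‖ ≤ 1) (hfn : ‖f‖ ≤ 1)
    (hk : ∀ k, Tendsto (fun n => d n (s k)) atTop (𝓝 (f (s k)))) (z : Z) :
    Tendsto (fun n => d n z) atTop (𝓝 (f z)) := by
  rw [Metric.tendsto_atTop]
  intro ε hε
  obtain ⟨k, hkz⟩ := hs.exists_dist_lt z (show (0:ℝ) < ε/4 by linarith)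
  have hz : ‖z - s k‖ < ε/4 := by rwa [dist_eq_norm] at hkz
  obtain ⟨N, hN⟩ := (Metric.tendsto_atTop.1 (hk k)) (ε/4) (by linarith)
  refine ⟨N, fun n hn => ?_⟩
  have hb1 : |d n z - d n (s k)| ≤ ‖z - s k‖ := by
    rw [← map_sub]
    calc |d n (z - s k)| = ‖d n (z - s k)‖ := (Real.norm_eq_abs _).symm
      _ ≤ ‖d n‖ * ‖z - s k‖ := (d n).le_opNorm _
      _ ≤ 1 * ‖z - s k‖ := mul_le_mul_of_nonneg_right (hdn n) (norm_nonneg _)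
      _ = ‖z - s k‖ := one_mul _
  have hb3 : |f (s k) - f z| ≤ ‖z - s k‖ := by
    rw [← map_sub]
    calc |f (s k - z)| = ‖f (s k - z)‖ := (Real.norm_eq_abs _).symm
      _ ≤ ‖f‖ * ‖s k - z‖ := f.le_opNorm _
      _ ≤ 1 * ‖s k - z‖ := mul_le_mul_of_nonneg_right hfn (norm_nonneg _)
      _ = ‖z - s k‖ := by rw [one_mul, norm_sub_rev]
  have hb2 : |d n (s k) - f (s k)| < ε/4 := by
    have := hN n hn
    rwa [Real.dist_eq] at this
  rw [Real.dist_eq]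
  calc |d n z - f z| ≤ |d n z - d n (s k)| + |d n (s k) - f z| := abs_sub_le _ _ _
    _ ≤ |d n z - d n (s k)| + (|d n (s k) - f (s k)| + |f (s k) - f z|) :=
        add_le_add_right (abs_sub_le _ _ _) _
    _ < ε/4 + (ε/4 + ε/4) :=
        add_lt_add (lt_of_le_of_lt hb1 hz) (add_lt_add hb2 (lt_of_le_of_lt hb3 hz))
    _ < ε := by linarith

set_option maxHeartbeats 1000000 in
set_option synthInstance.maxHeartbeats 400000 in
/-- a Banach space with the 1-SCP whose dual has the wKK* property is
Asplund. -/
theorem asplund_of_oneSCP_and_wKKstar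
    (X : Type*) [NormedAddCommGroup X] [NormedSpace ℝ X] [CompleteSpace X]
    (hSCP : OneSCP X) (hKK : WKKStar X) :
    ∀ Y : Subspace ℝ X, SeparableSpace Y → SeparableSpace (StrongDual ℝ Y) := by
  intro Y hY
  obtain ⟨Z, P, hYZ, hZsep, hP1, hPmem, hPfix⟩ := hSCP Y hY
  haveI := hZsep
  -- dense sequence in Z
  obtain ⟨s, hs⟩ := TopologicalSpace.exists_dense_seq Z
  -- the norm-one projection onto Z, viewed as a map into Z
  set π : X →L[ℝ] Z := P.codRestrict Z hPmem with hπdef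
  have hπz : ∀ z : Z, π (z : X) = z := by
    intro z
    apply Subtype.ext
    rw [ContinuousLinearMap.coe_codRestrict_apply]
    exact hPfix z z.2
  have hπx : ∀ x : X, ‖π x‖ = ‖P x‖ := fun x => Submodule.coe_norm (π x)
  have hπnorm : ‖π‖ ≤ 1 := by
    apply ContinuousLinearMap.opNorm_le_bound _ zero_le_one
    intro x
    rw [one_mul, hπx]
    calc ‖P x‖ ≤ ‖P‖ * ‖x‖ := P.le_opNorm x
      _ = ‖x‖ := by rw [hP1, one_mul]
  have hsub : ‖Z.subtypeL‖ ≤ 1 := by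
    apply ContinuousLinearMap.opNorm_le_bound _ zero_le_one
    intro z
    rw [one_mul, Submodule.subtypeL_apply, Submodule.norm_coe]
  -- `E g = g ∘ π` is a norm-preserving embedding of `Dual Z` into `Dual X` (on the sphere)
  have hE : ∀ g : StrongDual ℝ Z, ‖g‖ = 1 → ‖g.comp π‖ = 1 := by
    intro g hg
    apply le_antisymm
    · calc ‖g.comp π‖ ≤ ‖g‖ * ‖π‖ := g.opNorm_comp_le π
        _ ≤ 1 * 1 := mul_le_mul (le_of_eq hg) hπnorm (ContinuousLinearMap.opNorm_nonneg π) zero_le_one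
        _ = 1 := one_mul 1
    · have hgeq : g = (g.comp π).comp Z.subtypeL := by
        ext z
        simp only [ContinuousLinearMap.comp_apply, Submodule.subtypeL_apply]
        rw [hπz z]
      calc (1:ℝ) = ‖g‖ := hg.symm
        _ = ‖(g.comp π).comp Z.subtypeL‖ := by rw [← hgeq]
        _ ≤ ‖g.comp π‖ * ‖Z.subtypeL‖ := ContinuousLinearMap.opNorm_comp_le _ _
        _ ≤ ‖g.comp π‖ := mul_le_of_le_one_right (norm_nonneg _) hsub
  -- weak-star convergence in Dual Z implies weak convergence in Dual Z, via wKK* of X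
  have hweak : ∀ (d : ℕ → StrongDual ℝ Z) (f : StrongDual ℝ Z), (∀ n, ‖d n‖ = 1) → ‖f‖ = 1 →
      (∀ z : Z, Tendsto (fun n => d n z) atTop (𝓝 (f z))) →
      ∀ F : StrongDual ℝ (StrongDual ℝ Z), Tendsto (fun n => F (d n)) atTop (𝓝 (F f)) := by
    intro d f hdn hfn hw F
    have hXw : WStarTendsto (fun n => (d n).comp π) (f.comp π) := fun x => hw (π x)
    have hWK := hKK _ _ (fun n => hE _ (hdn n)) (hE f hfn) hXw
    set R : StrongDual ℝ X →L[ℝ] StrongDual ℝ Z :=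
      (ContinuousLinearMap.compL ℝ Z X ℝ).flip Z.subtypeL with hR
    have hRE : ∀ g : StrongDual ℝ Z, R (g.comp π) = g := by
      intro g
      ext z
      simp only [hR, ContinuousLinearMap.flip_apply, ContinuousLinearMap.compL_apply,
        ContinuousLinearMap.comp_apply, Submodule.subtypeL_apply]
      rw [hπz z]
    have h2 := hWK (F.comp R)
    simpa only [ContinuousLinearMap.comp_apply, hRE] using h2
  -- the unit sphere of Dual Z
  set A : Set (StrongDual ℝ Z) := {g | ‖g‖ = 1} with hA
  set Φ : StrongDual ℝ Z → (ℕ → ℝ) := fun g k => g (s k) with hΦ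
  have hΦinj : Function.Injective Φ := by
    intro g g' h
    apply DFunLike.coe_injective
    refine Continuous.ext_on hs g.continuous g'.continuous ?_
    rintro x ⟨k, rfl⟩
    exact congrFun h k
  obtain ⟨D', hD'c, hD'd⟩ := exists_countable_dense ↥(Φ '' A)
  set D : Set (StrongDual ℝ Z) := A ∩ Φ ⁻¹' (Subtype.val '' D') with hD
  have hDc : D.Countable :=
    Set.Countable.mono Set.inter_subset_right ((hD'c.image _).preimage hΦinj)
  set M := (Submodule.span ℝ D).topologicalClosure with hM
  have hDM : D ⊆ (M : Set (StrongDual ℝ Z)) :=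
    Set.Subset.trans Submodule.subset_span (Submodule.le_topologicalClosure _)
  have key : ∀ f ∈ A, f ∈ M := by
    intro f hf
    have hfT : Φ f ∈ Φ '' A := Set.mem_image_of_mem _ hf
    have hcl : (⟨Φ f, hfT⟩ : ↥(Φ '' A)) ∈ closure D' := hD'd _
    obtain ⟨u, hu, hul⟩ := mem_closure_iff_seq_limit.1 hcl
    have hval : Tendsto (fun n => ((u n : ↥(Φ '' A)) : ℕ → ℝ)) atTop (𝓝 (Φ f)) :=
      (continuous_subtype_val.tendsto _).comp hul
    choose d hdA hdΦ using fun n => (u n).2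
    have hdD : ∀ n, d n ∈ D := by
      intro n
      refine ⟨hdA n, ?_⟩
      rw [Set.mem_preimage, hdΦ n]
      exact Set.mem_image_of_mem _ (hu n)
    have hptw : ∀ k, Tendsto (fun n => d n (s k)) atTop (𝓝 (f (s k))) := by
      intro k
      have h3 := (tendsto_pi_nhds.1 hval) k
      have h4 : (fun n => ((u n : ↥(Φ '' A)) : ℕ → ℝ) k) = fun n => d n (s k) := by
        funext n
        rw [← hdΦ n]
      rw [h4] at h3
      exact h3
    have hwstar : ∀ z : Z, Tendsto (fun n => d n z) atTop (𝓝 (f z)) :=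
      tendsto_eval_of_dense s hs d f (fun n => le_of_eq (hdA n)) (le_of_eq hf) hptw
    exact mem_of_weak_lim M (Submodule.span ℝ D).isClosed_topologicalClosure d
      (fun n => hDM (hdD n)) f (hweak d f hdA hf hwstar)
  have hMuniv : ∀ g : StrongDual ℝ Z, g ∈ M := by
    intro g
    rcases eq_or_ne g 0 with rfl | hg
    · exact M.zero_mem
    · have hnz : ‖g‖ ≠ 0 := fun h => hg ((ContinuousLinearMap.opNorm_zero_iff g).1 h)
      have h1 : ‖g‖⁻¹ • g ∈ M := by
        apply key
        show ‖‖g‖⁻¹ • g‖ = 1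
        have hpos : 0 < ‖g‖ := lt_of_le_of_ne (ContinuousLinearMap.opNorm_nonneg g) (Ne.symm hnz)
        have h4 := ContinuousLinearMap.opNorm_smul_le ‖g‖⁻¹ g
        have h3 := ContinuousLinearMap.opNorm_smul_le ‖g‖ (‖g‖⁻¹ • g)
        rw [smul_smul, mul_inv_cancel₀ hnz, one_smul, Real.norm_eq_abs, abs_of_pos hpos] at h3
        rw [Real.norm_eq_abs, abs_of_pos (inv_pos.2 hpos), inv_mul_cancel₀ hnz] at h4
        nlinarith
      have h2 := M.smul_mem ‖g‖ h1
      rwa [smul_smul, mul_inv_cancel₀ hnz, one_smul] at h2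
  haveI hZdual : SeparableSpace (StrongDual ℝ Z) := by
    rw [← isSeparable_univ_iff]
    have hsep : IsSeparable (closure (↑(Submodule.span ℝ D) : Set (StrongDual ℝ Z))) :=
      hDc.isSeparable.span.closure
    refine hsep.mono ?_
    intro g _
    rw [← Submodule.topologicalClosure_coe]
    exact hMuniv g
  -- transfer separability from Dual Z to Dual Y via the (surjective) restriction map
  have hιnorm : ∀ y : Y, ‖(Submodule.inclusion hYZ : Y →ₗ[ℝ] Z) y‖ ≤ 1 * ‖y‖ := by
    intro y
    rw [one_mul]
    have : ‖(Submodule.inclusion hYZ : Y →ₗ[ℝ] Z) y‖ = ‖((Submodule.inclusion hYZ : Y →ₗ[ℝ] Z) y : X)‖ :=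
      Submodule.coe_norm _
    rw [this, Submodule.coe_inclusion, Submodule.norm_coe]
  set ι : Y →L[ℝ] Z := LinearMap.mkContinuous (Submodule.inclusion hYZ) 1 hιnorm with hι
  set ρ : StrongDual ℝ Z →L[ℝ] StrongDual ℝ Y :=
    (ContinuousLinearMap.compL ℝ Y Z ℝ).flip ι with hρ
  have hρsurj : Function.Surjective ρ := by
    intro f
    obtain ⟨gX, hgX, -⟩ := exists_extension_norm_eq Y f
    refine ⟨gX.comp Z.subtypeL, ?_⟩
    ext y
    have hιy : ((ι y : Z) : X) = (y : X) := rfl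
    simp only [hρ, ContinuousLinearMap.flip_apply, ContinuousLinearMap.compL_apply,
      ContinuousLinearMap.comp_apply, Submodule.subtypeL_apply]
    rw [hιy]
    exact hgX y
  exact hρsurj.denseRange.separableSpace ρ.continuous
end
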